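/- arXiv:math/0604405 — 2 statements merged into one kernel-verified Lean document; each statement's English description precedes it below -/
import Mathlib

section
/- The right A-module ε spanned by {e_l : l ∈ ℤ} with action e_l · a_{mj} = e^{iλm(l−j)} e_{l−j} satisfies the counit axiom: both (ε ⊗ A) ⊗_{A⊗A} Δ and (A ⊗ ε) ⊗_{A⊗A} Δ are isomorphic to A as (A,A)-bimodules. -/
open TensorProduct MulOpposite

section

variable {A E D : Type} [Ring A] [Algebra ℂ A]
  [AddCommGroup E] [Module ℂ E] [AddCommGroup D] [Module ℂ D]

/-- Relations of the balanced tensor product `(ε ⊗ A) ⊗_{A⊗A} Δ` inside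
`(ε ⊗ A) ⊗ Δ` (tensor products over `ℂ`). -/
noncomputable def counitRelL (rhoL : TensorProduct ℂ A A →ₐ[ℂ] Module.End ℂ D)
    (rhoE : Aᵐᵒᵖ →ₐ[ℂ] Module.End ℂ E) :
    Submodule ℂ (TensorProduct ℂ (TensorProduct ℂ E A) D) :=
  Submodule.span ℂ {z | ∃ (x : TensorProduct ℂ E A) (δ : D) (b₁ b₂ : A),
    z = (TensorProduct.map (rhoE (op b₁)) (LinearMap.mulRight ℂ b₂) x) ⊗ₜ[ℂ] δ
        - x ⊗ₜ[ℂ] (rhoL (b₁ ⊗ₜ[ℂ] b₂) δ)}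

/-- Relations of the balanced tensor product `(A ⊗ ε) ⊗_{A⊗A} Δ` inside
`(A ⊗ ε) ⊗ Δ`. -/
noncomputable def counitRelR (rhoL : TensorProduct ℂ A A →ₐ[ℂ] Module.End ℂ D)
    (rhoE : Aᵐᵒᵖ →ₐ[ℂ] Module.End ℂ E) :
    Submodule ℂ (TensorProduct ℂ (TensorProduct ℂ A E) D) :=
  Submodule.span ℂ {z | ∃ (x : TensorProduct ℂ A E) (δ : D) (b₁ b₂ : A),
    z = (TensorProduct.map (LinearMap.mulRight ℂ b₁) (rhoE (op b₂)) x) ⊗ₜ[ℂ] δ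
        - x ⊗ₜ[ℂ] (rhoL (b₁ ⊗ₜ[ℂ] b₂) δ)}

/-- Left action of `c ∈ A` on `(ε ⊗ A) ⊗ Δ` (on the `A` factor). -/
noncomputable def counitLactL (c : A) :
    TensorProduct ℂ (TensorProduct ℂ E A) D →ₗ[ℂ] TensorProduct ℂ (TensorProduct ℂ E A) D :=
  TensorProduct.map (TensorProduct.map LinearMap.id (LinearMap.mulLeft ℂ c)) LinearMap.id

/-- Left action of `c ∈ A` on `(A ⊗ ε) ⊗ Δ` (on the `A` factor). -/
noncomputable def counitLactR (c : A) :
    TensorProduct ℂ (TensorProduct ℂ A E) D →ₗ[ℂ] TensorProduct ℂ (TensorProduct ℂ A E) D :=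
  TensorProduct.map (TensorProduct.map (LinearMap.mulLeft ℂ c) LinearMap.id) LinearMap.id

/-- Right action of `c ∈ A` on `(ε ⊗ A) ⊗ Δ` (on the `Δ` factor). -/
noncomputable def counitRactL (rhoR : Aᵐᵒᵖ →ₐ[ℂ] Module.End ℂ D) (c : A) :
    TensorProduct ℂ (TensorProduct ℂ E A) D →ₗ[ℂ] TensorProduct ℂ (TensorProduct ℂ E A) D :=
  TensorProduct.map LinearMap.id (rhoR (op c))

/-- Right action of `c ∈ A` on `(A ⊗ ε) ⊗ Δ` (on the `Δ` factor). -/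
noncomputable def counitRactR (rhoR : Aᵐᵒᵖ →ₐ[ℂ] Module.End ℂ D) (c : A) :
    TensorProduct ℂ (TensorProduct ℂ A E) D →ₗ[ℂ] TensorProduct ℂ (TensorProduct ℂ A E) D :=
  TensorProduct.map LinearMap.id (rhoR (op c))

end

section AuxDefs

variable {A E D X : Type} [Ring A] [Algebra ℂ A]
  [AddCommGroup E] [Module ℂ E] [AddCommGroup D] [Module ℂ D]
  [AddCommGroup X] [Module ℂ X]

lemma mulLeft_add' (u v : A) :
    LinearMap.mulLeft ℂ (u + v) = LinearMap.mulLeft ℂ u + LinearMap.mulLeft ℂ v := by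
  ext x; simp [add_mul]

lemma mulLeft_smul' (c : ℂ) (u : A) :
    LinearMap.mulLeft ℂ (c • u) = c • LinearMap.mulLeft ℂ u := by
  ext x; simp [smul_mul_assoc]

lemma mulRight_add' (u v : A) :
    LinearMap.mulRight ℂ (u + v) = LinearMap.mulRight ℂ u + LinearMap.mulRight ℂ v := by
  ext x; simp [mul_add]

lemma mulRight_smul' (c : ℂ) (u : A) :
    LinearMap.mulRight ℂ (c • u) = c • LinearMap.mulRight ℂ u := by
  ext x; simp [mul_smul_comm]

/-- Φ̂ for the left counit side. -/
noncomputable def phiHatL (lam : ℝ) (a : ℤ → ℤ → A) (b : Module.Basis (ℤ × ℤ) ℂ A)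
    (be : Module.Basis ℤ ℂ E) (bd : Module.Basis (ℤ × ℤ × ℤ) ℂ D) :
    TensorProduct ℂ (TensorProduct ℂ E A) D →ₗ[ℂ] A :=
  ((be.tensorProduct b).tensorProduct bd).constr ℂ fun p =>
    Complex.exp (Complex.I * (lam *
      (((p.2.1 * p.1.1 - (p.1.2.1 + p.2.2.1) * (p.2.2.2 + p.1.1)) : ℤ) : ℝ))) •
      a (p.1.2.1 + p.2.2.1) (p.1.2.2 - p.2.2.2 - p.1.1)

/-- Φ̂ for the right counit side. -/
noncomputable def phiHatR (lam : ℝ) (a : ℤ → ℤ → A) (b : Module.Basis (ℤ × ℤ) ℂ A)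
    (be : Module.Basis ℤ ℂ E) (bd : Module.Basis (ℤ × ℤ × ℤ) ℂ D) :
    TensorProduct ℂ (TensorProduct ℂ A E) D →ₗ[ℂ] A :=
  ((b.tensorProduct be).tensorProduct bd).constr ℂ fun p =>
    Complex.exp (Complex.I * (lam *
      (((p.2.2.1 * p.1.2 - (p.1.1.1 + p.2.1) * (p.2.2.2 + p.1.2)) : ℤ) : ℝ))) •
      a (p.1.1.1 + p.2.1) (p.1.1.2 - p.2.2.2 - p.1.2)

/-- Balancing relation LHS, left side, as a bilinear map. -/
noncomputable def balTL (phi : TensorProduct ℂ (TensorProduct ℂ E A) D →ₗ[ℂ] A)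
    (rhoE : Aᵐᵒᵖ →ₐ[ℂ] Module.End ℂ E) :
    A →ₗ[ℂ] A →ₗ[ℂ] (TensorProduct ℂ (TensorProduct ℂ E A) D →ₗ[ℂ] A) :=
  LinearMap.mk₂ ℂ (fun b₁ b₂ => phi ∘ₗ TensorProduct.map
      (TensorProduct.map (rhoE (op b₁)) (LinearMap.mulRight ℂ b₂)) LinearMap.id)
    (fun u v w => by
      simp only [op_add, map_add, TensorProduct.map_add_left, LinearMap.comp_add])
    (fun c u w => by
      simp only [op_smul, map_smul, TensorProduct.map_smul_left, LinearMap.comp_smul])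
    (fun u v w => by
      simp only [mulRight_add', TensorProduct.map_add_right, TensorProduct.map_add_left,
        LinearMap.comp_add])
    (fun c u w => by
      simp only [mulRight_smul', TensorProduct.map_smul_right, TensorProduct.map_smul_left,
        LinearMap.comp_smul])

/-- Balancing relation LHS, right side, as a bilinear map. -/
noncomputable def balTR (phi : TensorProduct ℂ (TensorProduct ℂ A E) D →ₗ[ℂ] A)
    (rhoE : Aᵐᵒᵖ →ₐ[ℂ] Module.End ℂ E) :
    A →ₗ[ℂ] A →ₗ[ℂ] (TensorProduct ℂ (TensorProduct ℂ A E) D →ₗ[ℂ] A) :=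
  LinearMap.mk₂ ℂ (fun b₁ b₂ => phi ∘ₗ TensorProduct.map
      (TensorProduct.map (LinearMap.mulRight ℂ b₁) (rhoE (op b₂))) LinearMap.id)
    (fun u v w => by
      simp only [mulRight_add', TensorProduct.map_add_left, LinearMap.comp_add])
    (fun c u w => by
      simp only [mulRight_smul', TensorProduct.map_smul_left, LinearMap.comp_smul])
    (fun u v w => by
      simp only [op_add, map_add, TensorProduct.map_add_right, TensorProduct.map_add_left,
        LinearMap.comp_add])
    (fun c u w => by
      simp only [op_smul, map_smul, TensorProduct.map_smul_right, TensorProduct.map_smul_left,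
        LinearMap.comp_smul])

/-- Balancing relation RHS as a bilinear map. -/
noncomputable def balU (phi : TensorProduct ℂ X D →ₗ[ℂ] A)
    (rhoL : TensorProduct ℂ A A →ₐ[ℂ] Module.End ℂ D) :
    A →ₗ[ℂ] A →ₗ[ℂ] (TensorProduct ℂ X D →ₗ[ℂ] A) :=
  LinearMap.mk₂ ℂ (fun b₁ b₂ => phi ∘ₗ TensorProduct.map LinearMap.id (rhoL (b₁ ⊗ₜ[ℂ] b₂)))
    (fun u v w => by
      simp only [add_tmul, map_add, TensorProduct.map_add_right, LinearMap.comp_add])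
    (fun c u w => by
      simp only [← smul_tmul', map_smul, TensorProduct.map_smul_right, LinearMap.comp_smul])
    (fun u v w => by
      simp only [tmul_add, map_add, TensorProduct.map_add_right, LinearMap.comp_add])
    (fun c u w => by
      simp only [tmul_smul, map_smul, TensorProduct.map_smul_right, LinearMap.comp_smul])

/-- Left action composed with `phi`, as a linear map in the acting element (left side). -/
noncomputable def lactTL (phi : TensorProduct ℂ (TensorProduct ℂ E A) D →ₗ[ℂ] A) :
    A →ₗ[ℂ] (TensorProduct ℂ (TensorProduct ℂ E A) D →ₗ[ℂ] A) where
  toFun c := phi ∘ₗ TensorProduct.map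
    (TensorProduct.map LinearMap.id (LinearMap.mulLeft ℂ c)) LinearMap.id
  map_add' u v := by
    simp only [mulLeft_add', TensorProduct.map_add_right, TensorProduct.map_add_left,
      LinearMap.comp_add]
  map_smul' c u := by
    simp only [mulLeft_smul', TensorProduct.map_smul_right, TensorProduct.map_smul_left,
      LinearMap.comp_smul, RingHom.id_apply]

/-- Left action composed with `phi`, as a linear map in the acting element (right side). -/
noncomputable def lactTR (phi : TensorProduct ℂ (TensorProduct ℂ A E) D →ₗ[ℂ] A) :
    A →ₗ[ℂ] (TensorProduct ℂ (TensorProduct ℂ A E) D →ₗ[ℂ] A) where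
  toFun c := phi ∘ₗ TensorProduct.map
    (TensorProduct.map (LinearMap.mulLeft ℂ c) LinearMap.id) LinearMap.id
  map_add' u v := by
    simp only [mulLeft_add', TensorProduct.map_add_left, LinearMap.comp_add]
  map_smul' c u := by
    simp only [mulLeft_smul', TensorProduct.map_smul_left, LinearMap.comp_smul,
      RingHom.id_apply]

/-- Right action composed with `phi`, as a linear map in the acting element. -/
noncomputable def ractT (phi : TensorProduct ℂ X D →ₗ[ℂ] A)
    (rhoR : Aᵐᵒᵖ →ₐ[ℂ] Module.End ℂ D) :
    A →ₗ[ℂ] (TensorProduct ℂ X D →ₗ[ℂ] A) where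
  toFun c := phi ∘ₗ TensorProduct.map LinearMap.id (rhoR (op c))
  map_add' u v := by
    simp only [op_add, map_add, TensorProduct.map_add_right, LinearMap.comp_add]
  map_smul' c u := by
    simp only [op_smul, map_smul, TensorProduct.map_smul_right, LinearMap.comp_smul,
      RingHom.id_apply]

/-- Left multiplication composed with `phi`. -/
noncomputable def mulLcomp (phi : TensorProduct ℂ X D →ₗ[ℂ] A) :
    A →ₗ[ℂ] (TensorProduct ℂ X D →ₗ[ℂ] A) where
  toFun c := LinearMap.mulLeft ℂ c ∘ₗ phi
  map_add' u v := by simp only [mulLeft_add', LinearMap.add_comp]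
  map_smul' c u := by simp only [mulLeft_smul', LinearMap.smul_comp, RingHom.id_apply]

/-- Right multiplication composed with `phi`. -/
noncomputable def mulRcomp (phi : TensorProduct ℂ X D →ₗ[ℂ] A) :
    A →ₗ[ℂ] (TensorProduct ℂ X D →ₗ[ℂ] A) where
  toFun c := LinearMap.mulRight ℂ c ∘ₗ phi
  map_add' u v := by simp only [mulRight_add', LinearMap.add_comp]
  map_smul' c u := by simp only [mulRight_smul', LinearMap.smul_comp, RingHom.id_apply]

lemma smul_a_eq (a : ℤ → ℤ → A) {x y : ℂ} {i₁ j₁ i₂ j₂ : ℤ}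
    (hx : x = y) (hi : i₁ = i₂) (hj : j₁ = j₂) : x • a i₁ j₁ = y • a i₂ j₂ := by
  rw [hx, hi, hj]

lemma smul3L_eq (ee : ℤ → E) (a : ℤ → ℤ → A) (dd : ℤ → ℤ → ℤ → D) {x y : ℂ}
    {l m j n₁ n₂ k l' m' j' n₁' n₂' k' : ℤ}
    (hx : x = y) (h1 : l = l') (h2 : m = m') (h3 : j = j')
    (h4 : n₁ = n₁') (h5 : n₂ = n₂') (h6 : k = k') :
    x • ((ee l ⊗ₜ[ℂ] a m j) ⊗ₜ[ℂ] dd n₁ n₂ k)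
      = y • ((ee l' ⊗ₜ[ℂ] a m' j') ⊗ₜ[ℂ] dd n₁' n₂' k') := by
  subst h1; subst h2; subst h3; subst h4; subst h5; subst h6; rw [hx]

lemma smul3R_eq (ee : ℤ → E) (a : ℤ → ℤ → A) (dd : ℤ → ℤ → ℤ → D) {x y : ℂ}
    {l m j n₁ n₂ k l' m' j' n₁' n₂' k' : ℤ}
    (hx : x = y) (h1 : l = l') (h2 : m = m') (h3 : j = j')
    (h4 : n₁ = n₁') (h5 : n₂ = n₂') (h6 : k = k') :
    x • ((a m j ⊗ₜ[ℂ] ee l) ⊗ₜ[ℂ] dd n₁ n₂ k)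
      = y • ((a m' j' ⊗ₜ[ℂ] ee l') ⊗ₜ[ℂ] dd n₁' n₂' k') := by
  subst h1; subst h2; subst h3; subst h4; subst h5; subst h6; rw [hx]

end AuxDefs

section HalfL

theorem counit_half_L
    (lam : ℝ)
    {A : Type} [Ring A] [Algebra ℂ A]
    (a : ℤ → ℤ → A)
    (b : Module.Basis (ℤ × ℤ) ℂ A) (hb : ∀ n l : ℤ, b (n, l) = a n l)
    (hmul : ∀ n₁ l₁ n₂ l₂ : ℤ,
      a n₁ l₁ * a n₂ l₂ =
        Complex.exp (Complex.I * (lam * n₁ * l₂)) • a (n₁ + n₂) (l₁ + l₂))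
    {D : Type} [AddCommGroup D] [Module ℂ D]
    (dd : ℤ → ℤ → ℤ → D)
    (bd : Module.Basis (ℤ × ℤ × ℤ) ℂ D) (hbd : ∀ n₁ n₂ l : ℤ, bd (n₁, n₂, l) = dd n₁ n₂ l)
    (rhoL : TensorProduct ℂ A A →ₐ[ℂ] Module.End ℂ D)
    (rhoR : Aᵐᵒᵖ →ₐ[ℂ] Module.End ℂ D)
    (hL : ∀ m₁ j₁ m₂ j₂ n₁ n₂ l : ℤ,
      rhoL (a m₁ j₁ ⊗ₜ[ℂ] a m₂ j₂) (dd n₁ n₂ l) =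
        Complex.exp (-(Complex.I *
            (lam * (((n₁ + m₁) * j₁ + (n₂ + m₂) * j₂ : ℤ) : ℝ)))) •
          dd (n₁ + m₁) (n₂ + m₂) (l - j₁ - j₂))
    (hR : ∀ m j n₁ n₂ l : ℤ,
      rhoR (MulOpposite.op (a m j)) (dd n₁ n₂ l) =
        Complex.exp (Complex.I * (lam * (((m * (l - j)) : ℤ) : ℝ))) •
          dd (n₁ + m) (n₂ + m) (l - j))
    {E : Type} [AddCommGroup E] [Module ℂ E]
    (ee : ℤ → E) (be : Module.Basis ℤ ℂ E) (hbe : ∀ l : ℤ, be l = ee l)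
    (rhoE : Aᵐᵒᵖ →ₐ[ℂ] Module.End ℂ E)
    (hE : ∀ m j l : ℤ,
      rhoE (MulOpposite.op (a m j)) (ee l) =
        Complex.exp (Complex.I * (lam * (((m * (l - j)) : ℤ) : ℝ))) • ee (l - j)) :
    ∃ Φ : (TensorProduct ℂ (TensorProduct ℂ E A) D ⧸ counitRelL rhoL rhoE) ≃ₗ[ℂ] A,
      ∀ c : A, ∀ z,
        Φ (Submodule.Quotient.mk (counitLactL c z)) = c * Φ (Submodule.Quotient.mk z) ∧
        Φ (Submodule.Quotient.mk (counitRactL rhoR c z)) = Φ (Submodule.Quotient.mk z) * c := by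
  set φ : TensorProduct ℂ (TensorProduct ℂ E A) D →ₗ[ℂ] A := phiHatL lam a b be bd with hφ
  have hphi : ∀ l m j n₁ n₂ k : ℤ,
      φ ((ee l ⊗ₜ[ℂ] a m j) ⊗ₜ[ℂ] dd n₁ n₂ k) =
        Complex.exp (Complex.I * (lam *
          (((n₁ * l - (m + n₂) * (k + l)) : ℤ) : ℝ))) • a (m + n₂) (j - k - l) := by
    intro l m j n₁ n₂ k
    rw [hφ, phiHatL, ← hbe l, ← hb m j, ← hbd n₁ n₂ k, ← Module.Basis.tensorProduct_apply,
      ← Module.Basis.tensorProduct_apply, Module.Basis.constr_basis]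
  -- balancing
  have hbal : ∀ b₁ b₂ : A,
      φ ∘ₗ TensorProduct.map
          (TensorProduct.map (rhoE (op b₁)) (LinearMap.mulRight ℂ b₂)) LinearMap.id
        = φ ∘ₗ TensorProduct.map LinearMap.id (rhoL (b₁ ⊗ₜ[ℂ] b₂)) := by
    have h : balTL φ rhoE = balU φ rhoL := by
      apply b.ext; rintro ⟨m₁, j₁⟩
      apply b.ext; rintro ⟨m₂, j₂⟩
      apply Module.Basis.ext ((be.tensorProduct b).tensorProduct bd)
      rintro ⟨⟨l, m, j⟩, n₁, n₂, k⟩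
      simp only [balTL, balU, LinearMap.mk₂_apply, LinearMap.coe_comp, Function.comp_apply,
        Module.Basis.tensorProduct_apply, TensorProduct.map_tmul, LinearMap.id_coe, id_eq,
        LinearMap.mulRight_apply, hb, hbe, hbd, hE, hmul, hL]
      simp only [← TensorProduct.smul_tmul', TensorProduct.tmul_smul, map_smul, smul_smul, hphi]
      refine smul_a_eq a ?_ (by ring) (by ring)
      simp only [← Complex.exp_add]
      congr 1
      push_cast
      ring
    intro b₁ b₂
    exact LinearMap.congr_fun (LinearMap.congr_fun h b₁) b₂
  have hker : counitRelL rhoL rhoE ≤ LinearMap.ker φ := by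
    simp only [counitRelL]
    rw [Submodule.span_le]
    rintro z ⟨x, δ, b₁, b₂, rfl⟩
    simp only [SetLike.mem_coe, LinearMap.mem_ker, map_sub, sub_eq_zero]
    have h := LinearMap.congr_fun (hbal b₁ b₂) (x ⊗ₜ[ℂ] δ)
    simpa using h
  -- left action
  have hlact : ∀ c : A, φ ∘ₗ counitLactL c = LinearMap.mulLeft ℂ c ∘ₗ φ := by
    have h : lactTL φ = mulLcomp φ := by
      apply b.ext; rintro ⟨mc, jc⟩
      apply Module.Basis.ext ((be.tensorProduct b).tensorProduct bd)
      rintro ⟨⟨l, m, j⟩, n₁, n₂, k⟩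
      simp only [lactTL, mulLcomp, LinearMap.coe_mk, AddHom.coe_mk, LinearMap.coe_comp,
        Function.comp_apply, Module.Basis.tensorProduct_apply, TensorProduct.map_tmul,
        LinearMap.id_coe, id_eq, LinearMap.mulLeft_apply, hb, hbe, hbd, hmul]
      simp only [← TensorProduct.smul_tmul', TensorProduct.tmul_smul, map_smul, smul_smul,
        hphi, mul_smul_comm, hmul]
      refine smul_a_eq a ?_ (by ring) (by ring)
      simp only [← Complex.exp_add]
      congr 1
      push_cast
      ring
    intro c
    exact LinearMap.congr_fun h c
  -- right action
  have hract : ∀ c : A,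
      φ ∘ₗ TensorProduct.map LinearMap.id (rhoR (op c)) = LinearMap.mulRight ℂ c ∘ₗ φ := by
    have h : ractT φ rhoR = mulRcomp φ := by
      apply b.ext; rintro ⟨mc, jc⟩
      apply Module.Basis.ext ((be.tensorProduct b).tensorProduct bd)
      rintro ⟨⟨l, m, j⟩, n₁, n₂, k⟩
      simp only [ractT, mulRcomp, LinearMap.coe_mk, AddHom.coe_mk, LinearMap.coe_comp,
        Function.comp_apply, Module.Basis.tensorProduct_apply, TensorProduct.map_tmul,
        LinearMap.id_coe, id_eq, LinearMap.mulRight_apply, hb, hbe, hbd, hR]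
      simp only [TensorProduct.tmul_smul, map_smul, smul_smul, hphi, smul_mul_assoc, hmul]
      refine smul_a_eq a ?_ (by ring) (by ring)
      simp only [← Complex.exp_add]
      congr 1
      push_cast
      ring
    intro c
    exact LinearMap.congr_fun h c
  -- canonical form
  have hcanon : ∀ l m j n₁ n₂ k : ℤ,
      Submodule.Quotient.mk (p := counitRelL rhoL rhoE)
          ((ee l ⊗ₜ[ℂ] a m j) ⊗ₜ[ℂ] dd n₁ n₂ k) =
        Complex.exp (Complex.I * (lam *
            (((n₁ * l - (m + n₂) * (k + l)) : ℤ) : ℝ))) •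
          Submodule.Quotient.mk ((ee 0 ⊗ₜ[ℂ] a (m + n₂) (j - k - l)) ⊗ₜ[ℂ] dd 0 0 0) := by
    intro l m j n₁ n₂ k
    rw [← Submodule.Quotient.mk_smul, Submodule.Quotient.eq]
    have hmem : ((TensorProduct.map (rhoE (op (a (-n₁) (-l))))
          (LinearMap.mulRight ℂ (a (-n₂) (k + l)))
          (ee 0 ⊗ₜ[ℂ] a (m + n₂) (j - k - l))) ⊗ₜ[ℂ] dd n₁ n₂ k
        - (ee 0 ⊗ₜ[ℂ] a (m + n₂) (j - k - l)) ⊗ₜ[ℂ]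
            (rhoL (a (-n₁) (-l) ⊗ₜ[ℂ] a (-n₂) (k + l)) (dd n₁ n₂ k)))
        ∈ counitRelL rhoL rhoE :=
      Submodule.subset_span ⟨_, _, _, _, rfl⟩
    have hmem2 := (counitRelL rhoL rhoE).smul_mem
      (Complex.exp (Complex.I * (lam * (((n₁ * l - (m + n₂) * (k + l)) : ℤ) : ℝ)))) hmem
    convert hmem2 using 1
    simp only [TensorProduct.map_tmul, LinearMap.mulRight_apply, hE, hmul, hL, smul_sub,
      ← TensorProduct.smul_tmul', TensorProduct.tmul_smul, smul_smul]
    congr 1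
    · rw [← one_smul ℂ ((ee l ⊗ₜ[ℂ] a m j) ⊗ₜ[ℂ] dd n₁ n₂ k), ← Complex.exp_zero]
      refine smul3L_eq ee a dd ?_ (by ring) (by ring) (by ring) rfl rfl rfl
      simp only [← Complex.exp_add]
      congr 1
      push_cast
      ring
    · refine smul3L_eq ee a dd ?_ rfl rfl rfl (by ring) (by ring) (by ring)
      simp only [← Complex.exp_add]
      congr 1
      push_cast
      ring
  refine ⟨LinearEquiv.ofLinear ((counitRelL rhoL rhoE).liftQ φ hker)
      (b.constr ℂ fun p => Submodule.Quotient.mk ((be 0 ⊗ₜ[ℂ] b p) ⊗ₜ[ℂ] bd (0, 0, 0)))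
      ?_ ?_, ?_⟩
  · apply b.ext
    rintro ⟨M, J⟩
    simp only [LinearMap.coe_comp, Function.comp_apply, Module.Basis.constr_basis,
      Submodule.liftQ_apply, LinearMap.id_coe, id_eq]
    rw [hbe, hb, hbd, hphi]
    norm_num
  · apply Submodule.linearMap_qext
    apply Module.Basis.ext ((be.tensorProduct b).tensorProduct bd)
    rintro ⟨⟨l, m, j⟩, n₁, n₂, k⟩
    simp only [LinearMap.coe_comp, Function.comp_apply, Submodule.mkQ_apply,
      Submodule.liftQ_apply, Module.Basis.tensorProduct_apply, LinearMap.id_coe, id_eq]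
    rw [hbe l, hb m j, hbd n₁ n₂ k, hphi, map_smul,
      show a (m + n₂) (j - k - l) = b (m + n₂, j - k - l) from (hb _ _).symm,
      Module.Basis.constr_basis, hbe 0, hb (m + n₂) (j - k - l), hbd 0 0 0]
    exact (hcanon l m j n₁ n₂ k).symm
  · intro c z
    constructor
    · have h := LinearMap.congr_fun (hlact c) z
      simpa only [LinearEquiv.ofLinear_apply, Submodule.liftQ_apply, LinearMap.coe_comp,
        Function.comp_apply, LinearMap.mulLeft_apply, counitLactL] using h
    · have h := LinearMap.congr_fun (hract c) z
      simpa only [LinearEquiv.ofLinear_apply, Submodule.liftQ_apply, LinearMap.coe_comp,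
        Function.comp_apply, LinearMap.mulRight_apply, counitRactL] using h

end HalfL

section HalfR

theorem counit_half_R
    (lam : ℝ)
    {A : Type} [Ring A] [Algebra ℂ A]
    (a : ℤ → ℤ → A)
    (b : Module.Basis (ℤ × ℤ) ℂ A) (hb : ∀ n l : ℤ, b (n, l) = a n l)
    (hmul : ∀ n₁ l₁ n₂ l₂ : ℤ,
      a n₁ l₁ * a n₂ l₂ =
        Complex.exp (Complex.I * (lam * n₁ * l₂)) • a (n₁ + n₂) (l₁ + l₂))
    {D : Type} [AddCommGroup D] [Module ℂ D]
    (dd : ℤ → ℤ → ℤ → D)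
    (bd : Module.Basis (ℤ × ℤ × ℤ) ℂ D) (hbd : ∀ n₁ n₂ l : ℤ, bd (n₁, n₂, l) = dd n₁ n₂ l)
    (rhoL : TensorProduct ℂ A A →ₐ[ℂ] Module.End ℂ D)
    (rhoR : Aᵐᵒᵖ →ₐ[ℂ] Module.End ℂ D)
    (hL : ∀ m₁ j₁ m₂ j₂ n₁ n₂ l : ℤ,
      rhoL (a m₁ j₁ ⊗ₜ[ℂ] a m₂ j₂) (dd n₁ n₂ l) =
        Complex.exp (-(Complex.I *
            (lam * (((n₁ + m₁) * j₁ + (n₂ + m₂) * j₂ : ℤ) : ℝ)))) •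
          dd (n₁ + m₁) (n₂ + m₂) (l - j₁ - j₂))
    (hR : ∀ m j n₁ n₂ l : ℤ,
      rhoR (MulOpposite.op (a m j)) (dd n₁ n₂ l) =
        Complex.exp (Complex.I * (lam * (((m * (l - j)) : ℤ) : ℝ))) •
          dd (n₁ + m) (n₂ + m) (l - j))
    {E : Type} [AddCommGroup E] [Module ℂ E]
    (ee : ℤ → E) (be : Module.Basis ℤ ℂ E) (hbe : ∀ l : ℤ, be l = ee l)
    (rhoE : Aᵐᵒᵖ →ₐ[ℂ] Module.End ℂ E)
    (hE : ∀ m j l : ℤ,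
      rhoE (MulOpposite.op (a m j)) (ee l) =
        Complex.exp (Complex.I * (lam * (((m * (l - j)) : ℤ) : ℝ))) • ee (l - j)) :
    ∃ Ψ : (@HasQuotient.Quotient (TensorProduct ℂ (TensorProduct ℂ A E) D) _ Submodule.hasQuotient (counitRelR rhoL rhoE)) ≃ₗ[ℂ] A,
      ∀ c : A, ∀ z,
        Ψ (Submodule.Quotient.mk (counitLactR c z)) = c * Ψ (Submodule.Quotient.mk z) ∧
        Ψ (Submodule.Quotient.mk (counitRactR rhoR c z)) = Ψ (Submodule.Quotient.mk z) * c := by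
  set φ : TensorProduct ℂ (TensorProduct ℂ A E) D →ₗ[ℂ] A := phiHatR lam a b be bd with hφ
  have hphi : ∀ l m j n₁ n₂ k : ℤ,
      φ ((a m j ⊗ₜ[ℂ] ee l) ⊗ₜ[ℂ] dd n₁ n₂ k) =
        Complex.exp (Complex.I * (lam *
          (((n₂ * l - (m + n₁) * (k + l)) : ℤ) : ℝ))) • a (m + n₁) (j - k - l) := by
    intro l m j n₁ n₂ k
    rw [hφ, phiHatR, ← hbe l, ← hb m j, ← hbd n₁ n₂ k, ← Module.Basis.tensorProduct_apply,
      ← Module.Basis.tensorProduct_apply, Module.Basis.constr_basis]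
  -- balancing
  have hbal : ∀ b₁ b₂ : A,
      φ ∘ₗ TensorProduct.map
          (TensorProduct.map (LinearMap.mulRight ℂ b₁) (rhoE (op b₂))) LinearMap.id
        = φ ∘ₗ TensorProduct.map LinearMap.id (rhoL (b₁ ⊗ₜ[ℂ] b₂)) := by
    have h : balTR φ rhoE = balU φ rhoL := by
      apply b.ext; rintro ⟨m₁, j₁⟩
      apply b.ext; rintro ⟨m₂, j₂⟩
      apply Module.Basis.ext ((b.tensorProduct be).tensorProduct bd)
      rintro ⟨⟨⟨m, j⟩, l⟩, n₁, n₂, k⟩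
      simp only [balTR, balU, LinearMap.mk₂_apply, LinearMap.coe_comp, Function.comp_apply,
        Module.Basis.tensorProduct_apply, TensorProduct.map_tmul, LinearMap.id_coe, id_eq,
        LinearMap.mulRight_apply, hb, hbe, hbd, hE, hmul, hL]
      simp only [← TensorProduct.smul_tmul', TensorProduct.tmul_smul, map_smul, smul_smul, hphi]
      refine smul_a_eq a ?_ (by ring) (by ring)
      simp only [← Complex.exp_add]
      congr 1
      push_cast
      ring
    intro b₁ b₂
    exact LinearMap.congr_fun (LinearMap.congr_fun h b₁) b₂
  have hker : counitRelR rhoL rhoE ≤ LinearMap.ker φ := by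
    simp only [counitRelR]
    rw [Submodule.span_le]
    rintro z ⟨x, δ, b₁, b₂, rfl⟩
    simp only [SetLike.mem_coe, LinearMap.mem_ker, map_sub, sub_eq_zero]
    have h := LinearMap.congr_fun (hbal b₁ b₂) (x ⊗ₜ[ℂ] δ)
    simpa using h
  -- left action
  have hlact : ∀ c : A, φ ∘ₗ counitLactR c = LinearMap.mulLeft ℂ c ∘ₗ φ := by
    have h : lactTR φ = mulLcomp φ := by
      apply b.ext; rintro ⟨mc, jc⟩
      apply Module.Basis.ext ((b.tensorProduct be).tensorProduct bd)
      rintro ⟨⟨⟨m, j⟩, l⟩, n₁, n₂, k⟩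
      simp only [lactTR, mulLcomp, LinearMap.coe_mk, AddHom.coe_mk, LinearMap.coe_comp,
        Function.comp_apply, Module.Basis.tensorProduct_apply, TensorProduct.map_tmul,
        LinearMap.id_coe, id_eq, LinearMap.mulLeft_apply, hb, hbe, hbd, hmul]
      simp only [← TensorProduct.smul_tmul', TensorProduct.tmul_smul, map_smul, smul_smul,
        hphi, mul_smul_comm, hmul]
      refine smul_a_eq a ?_ (by ring) (by ring)
      simp only [← Complex.exp_add]
      congr 1
      push_cast
      ring
    intro c
    exact LinearMap.congr_fun h c
  -- right action
  have hract : ∀ c : A,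
      φ ∘ₗ TensorProduct.map LinearMap.id (rhoR (op c)) = LinearMap.mulRight ℂ c ∘ₗ φ := by
    have h : ractT φ rhoR = mulRcomp φ := by
      apply b.ext; rintro ⟨mc, jc⟩
      apply Module.Basis.ext ((b.tensorProduct be).tensorProduct bd)
      rintro ⟨⟨⟨m, j⟩, l⟩, n₁, n₂, k⟩
      simp only [ractT, mulRcomp, LinearMap.coe_mk, AddHom.coe_mk, LinearMap.coe_comp,
        Function.comp_apply, Module.Basis.tensorProduct_apply, TensorProduct.map_tmul,
        LinearMap.id_coe, id_eq, LinearMap.mulRight_apply, hb, hbe, hbd, hR]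
      simp only [TensorProduct.tmul_smul, map_smul, smul_smul, hphi, smul_mul_assoc, hmul]
      refine smul_a_eq a ?_ (by ring) (by ring)
      simp only [← Complex.exp_add]
      congr 1
      push_cast
      ring
    intro c
    exact LinearMap.congr_fun h c
  -- canonical form
  have hcanon : ∀ l m j n₁ n₂ k : ℤ,
      Submodule.Quotient.mk (p := counitRelR rhoL rhoE)
          ((a m j ⊗ₜ[ℂ] ee l) ⊗ₜ[ℂ] dd n₁ n₂ k) =
        Complex.exp (Complex.I * (lam *
            (((n₂ * l - (m + n₁) * (k + l)) : ℤ) : ℝ))) •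
          Submodule.Quotient.mk ((a (m + n₁) (j - k - l) ⊗ₜ[ℂ] ee 0) ⊗ₜ[ℂ] dd 0 0 0) := by
    intro l m j n₁ n₂ k
    rw [← Submodule.Quotient.mk_smul, Submodule.Quotient.eq]
    have hmem : ((TensorProduct.map (LinearMap.mulRight ℂ (a (-n₁) (k + l)))
          (rhoE (op (a (-n₂) (-l))))
          (a (m + n₁) (j - k - l) ⊗ₜ[ℂ] ee 0)) ⊗ₜ[ℂ] dd n₁ n₂ k
        - (a (m + n₁) (j - k - l) ⊗ₜ[ℂ] ee 0) ⊗ₜ[ℂ]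
            (rhoL (a (-n₁) (k + l) ⊗ₜ[ℂ] a (-n₂) (-l)) (dd n₁ n₂ k)))
        ∈ counitRelR rhoL rhoE :=
      Submodule.subset_span ⟨_, _, _, _, rfl⟩
    have hmem2 := (counitRelR rhoL rhoE).smul_mem
      (Complex.exp (Complex.I * (lam * (((n₂ * l - (m + n₁) * (k + l)) : ℤ) : ℝ)))) hmem
    convert hmem2 using 1
    simp only [TensorProduct.map_tmul, LinearMap.mulRight_apply, hE, hmul, hL, smul_sub,
      ← TensorProduct.smul_tmul', TensorProduct.tmul_smul, smul_smul]
    congr 1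
    · rw [← one_smul ℂ ((a m j ⊗ₜ[ℂ] ee l) ⊗ₜ[ℂ] dd n₁ n₂ k), ← Complex.exp_zero]
      refine smul3R_eq ee a dd ?_ (by ring) (by ring) (by ring) rfl rfl rfl
      simp only [← Complex.exp_add]
      congr 1
      push_cast
      ring
    · refine smul3R_eq ee a dd ?_ rfl rfl rfl (by ring) (by ring) (by ring)
      simp only [← Complex.exp_add]
      congr 1
      push_cast
      ring
  refine ⟨LinearEquiv.ofLinear (@Submodule.liftQ ℂ (TensorProduct ℂ (TensorProduct ℂ A E) D) _
      TensorProduct.addCommGroup _ (counitRelR rhoL rhoE) ℂ A _ _ _ _ φ hker)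
      (b.constr ℂ fun p => Submodule.Quotient.mk ((b p ⊗ₜ[ℂ] be 0) ⊗ₜ[ℂ] bd (0, 0, 0)))
      ?_ ?_, ?_⟩
  · apply b.ext
    rintro ⟨M, J⟩
    simp only [LinearMap.coe_comp, Function.comp_apply, Module.Basis.constr_basis,
      Submodule.liftQ_apply, LinearMap.id_coe, id_eq]
    rw [hbe, hb, hbd, hphi]
    norm_num
  · apply Submodule.linearMap_qext
    apply Module.Basis.ext ((b.tensorProduct be).tensorProduct bd)
    rintro ⟨⟨⟨m, j⟩, l⟩, n₁, n₂, k⟩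
    simp only [LinearMap.coe_comp, Function.comp_apply, Submodule.mkQ_apply,
      Submodule.liftQ_apply, Module.Basis.tensorProduct_apply, LinearMap.id_coe, id_eq]
    rw [hbe l, hb m j, hbd n₁ n₂ k, hphi, map_smul,
      show a (m + n₁) (j - k - l) = b (m + n₁, j - k - l) from (hb _ _).symm,
      Module.Basis.constr_basis, hbe 0, hb (m + n₁) (j - k - l), hbd 0 0 0]
    exact (hcanon l m j n₁ n₂ k).symm
  · intro c z
    constructor
    · have h := LinearMap.congr_fun (hlact c) z
      simpa only [LinearEquiv.ofLinear_apply, Submodule.liftQ_apply, LinearMap.coe_comp,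
        Function.comp_apply, LinearMap.mulLeft_apply, counitLactR] using h
    · have h := LinearMap.congr_fun (hract c) z
      simpa only [LinearEquiv.ofLinear_apply, Submodule.liftQ_apply, LinearMap.coe_comp,
        Function.comp_apply, LinearMap.mulRight_apply, counitRactR] using h

end HalfR

/-- The counit axiom (H2) for the hopfish structure on the irrational rotation
algebra: both `(ε ⊗ A) ⊗_{A⊗A} Δ` and `(A ⊗ ε) ⊗_{A⊗A} Δ` are isomorphic to `A`
as `(A,A)`-bimodules, where `ε` is the counit right module with
`e_l · a_{mj} = e^{iλm(l-j)} e_{l-j}` and `Δ` is the coproduct bimodule. -/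
theorem counit_axiom
    (lam : ℝ) (hlam : Irrational (lam / (2 * Real.pi)))
    (A : Type) [Ring A] [Algebra ℂ A]
    (a : ℤ → ℤ → A)
    (b : Module.Basis (ℤ × ℤ) ℂ A) (hb : ∀ n l : ℤ, b (n, l) = a n l)
    (hmul : ∀ n₁ l₁ n₂ l₂ : ℤ,
      a n₁ l₁ * a n₂ l₂ =
        Complex.exp (Complex.I * (lam * n₁ * l₂)) • a (n₁ + n₂) (l₁ + l₂))
    (D : Type) [AddCommGroup D] [Module ℂ D]
    (dd : ℤ → ℤ → ℤ → D)
    (bd : Module.Basis (ℤ × ℤ × ℤ) ℂ D) (hbd : ∀ n₁ n₂ l : ℤ, bd (n₁, n₂, l) = dd n₁ n₂ l)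
    (rhoL : TensorProduct ℂ A A →ₐ[ℂ] Module.End ℂ D)
    (rhoR : Aᵐᵒᵖ →ₐ[ℂ] Module.End ℂ D)
    (hL : ∀ m₁ j₁ m₂ j₂ n₁ n₂ l : ℤ,
      rhoL (a m₁ j₁ ⊗ₜ[ℂ] a m₂ j₂) (dd n₁ n₂ l) =
        Complex.exp (-(Complex.I *
            (lam * (((n₁ + m₁) * j₁ + (n₂ + m₂) * j₂ : ℤ) : ℝ)))) •
          dd (n₁ + m₁) (n₂ + m₂) (l - j₁ - j₂))
    (hR : ∀ m j n₁ n₂ l : ℤ,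
      rhoR (MulOpposite.op (a m j)) (dd n₁ n₂ l) =
        Complex.exp (Complex.I * (lam * (((m * (l - j)) : ℤ) : ℝ))) •
          dd (n₁ + m) (n₂ + m) (l - j))
    (E : Type) [AddCommGroup E] [Module ℂ E]
    (ee : ℤ → E) (be : Module.Basis ℤ ℂ E) (hbe : ∀ l : ℤ, be l = ee l)
    (rhoE : Aᵐᵒᵖ →ₐ[ℂ] Module.End ℂ E)
    (hE : ∀ m j l : ℤ,
      rhoE (MulOpposite.op (a m j)) (ee l) =
        Complex.exp (Complex.I * (lam * (((m * (l - j)) : ℤ) : ℝ))) • ee (l - j)) :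
    (∃ Φ : (TensorProduct ℂ (TensorProduct ℂ E A) D ⧸ counitRelL rhoL rhoE) ≃ₗ[ℂ] A,
      ∀ c : A, ∀ z,
        Φ (Submodule.Quotient.mk (counitLactL c z)) = c * Φ (Submodule.Quotient.mk z) ∧
        Φ (Submodule.Quotient.mk (counitRactL rhoR c z)) = Φ (Submodule.Quotient.mk z) * c) ∧
    (∃ Ψ : (@HasQuotient.Quotient (TensorProduct ℂ (TensorProduct ℂ A E) D) _ Submodule.hasQuotient (counitRelR rhoL rhoE)) ≃ₗ[ℂ] A,
      ∀ c : A, ∀ z,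
        Ψ (Submodule.Quotient.mk (counitLactR c z)) = c * Ψ (Submodule.Quotient.mk z) ∧
        Ψ (Submodule.Quotient.mk (counitRactR rhoR c z)) = Ψ (Submodule.Quotient.mk z) * c) :=
  ⟨counit_half_L lam a b hb hmul dd bd hbd rhoL rhoR hL hR ee be hbe rhoE hE,
   counit_half_R lam a b hb hmul dd bd hbd rhoL rhoR hL hR ee be hbe rhoE hE⟩
end

section
/- The sesquiunital sesquialgebra (A, ε, Δ) admits no hopfish antipode: there is no left A⊗A-module S which is free of rank one as a left A-module and whose ℂ-linear dual S* is isomorphic as a right A⊗A-module to Hom_A(ε, Δ). Concretely: any right A⊗1-linear map ψ : A* → Hom_A(ε, Δ) annihilates the eigenvector z ∈ A* defined by z(a_{nl}) = δ_{n,0}, hence is not injective. -/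
/-- Nonexistence of a hopfish antipode for `(A, ε, Δ)`: any right `A⊗1`-linear
map `ψ : A* → Hom_A(ε, Δ)` annihilates the eigenvector `z ∈ A*` defined by
`z(a_{nl}) = δ_{n,0}`, and hence is not injective.  Here `A*` is the full
`ℂ`-linear dual with right action `(φ·a)(b) = φ(ab)`, `Hom_A(ε,Δ)` is realized
as the linear maps `Δ → ε` commuting with the right `A`-actions, with right
`A⊗A`-action by pullback along the left `A⊗A`-action on `Δ`. -/
theorem no_hopfish_antipode
    (lam : ℝ) (hlam : Irrational (lam / (2 * Real.pi)))
    (A : Type) [Ring A] [Algebra ℂ A]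
    (a : ℤ → ℤ → A)
    (b : Module.Basis (ℤ × ℤ) ℂ A) (hb : ∀ n l : ℤ, b (n, l) = a n l)
    (hmul : ∀ n₁ l₁ n₂ l₂ : ℤ,
      a n₁ l₁ * a n₂ l₂ =
        Complex.exp (Complex.I * (lam * n₁ * l₂)) • a (n₁ + n₂) (l₁ + l₂))
    (D : Type) [AddCommGroup D] [Module ℂ D]
    (dd : ℤ → ℤ → ℤ → D)
    (bd : Module.Basis (ℤ × ℤ × ℤ) ℂ D) (hbd : ∀ n₁ n₂ l : ℤ, bd (n₁, n₂, l) = dd n₁ n₂ l)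
    (rhoL : TensorProduct ℂ A A →ₐ[ℂ] Module.End ℂ D)
    (rhoR : Aᵐᵒᵖ →ₐ[ℂ] Module.End ℂ D)
    (hL : ∀ m₁ j₁ m₂ j₂ n₁ n₂ l : ℤ,
      rhoL (a m₁ j₁ ⊗ₜ[ℂ] a m₂ j₂) (dd n₁ n₂ l) =
        Complex.exp (-(Complex.I *
            (lam * (((n₁ + m₁) * j₁ + (n₂ + m₂) * j₂ : ℤ) : ℝ)))) •
          dd (n₁ + m₁) (n₂ + m₂) (l - j₁ - j₂))
    (hR : ∀ m j n₁ n₂ l : ℤ,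
      rhoR (MulOpposite.op (a m j)) (dd n₁ n₂ l) =
        Complex.exp (Complex.I * (lam * (((m * (l - j)) : ℤ) : ℝ))) •
          dd (n₁ + m) (n₂ + m) (l - j))
    (E : Type) [AddCommGroup E] [Module ℂ E]
    (ee : ℤ → E) (be : Module.Basis ℤ ℂ E) (hbe : ∀ l : ℤ, be l = ee l)
    (rhoE : Aᵐᵒᵖ →ₐ[ℂ] Module.End ℂ E)
    (hE : ∀ m j l : ℤ,
      rhoE (MulOpposite.op (a m j)) (ee l) =
        Complex.exp (Complex.I * (lam * (((m * (l - j)) : ℤ) : ℝ))) • ee (l - j))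
    -- `ψ : A* → Hom_A(ε, Δ)`, taking values in right `A`-linear maps `Δ → ε`:
    (ψ : Module.Dual ℂ A →ₗ[ℂ] (D →ₗ[ℂ] E))
    (hψHom : ∀ (φ : Module.Dual ℂ A) (c : A) (δ : D),
      (ψ φ) (rhoR (MulOpposite.op c) δ) = rhoE (MulOpposite.op c) ((ψ φ) δ))
    -- right `A⊗1`-linearity of `ψ`:
    (hψEquiv : ∀ (c : A) (φ : Module.Dual ℂ A) (δ : D),
      (ψ (φ ∘ₗ LinearMap.mulLeft ℂ c)) δ = (ψ φ) (rhoL (c ⊗ₜ[ℂ] (1 : A)) δ)) :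
    ψ (b.constr ℂ fun nl => if nl.1 = 0 then (1 : ℂ) else 0) = 0 ∧
    ¬ Function.Injective ψ := by

  classical
  set z : Module.Dual ℂ A := b.constr ℂ fun nl => if nl.1 = 0 then (1 : ℂ) else 0 with hz_def
  have hzb : ∀ n l : ℤ, z (a n l) = if n = 0 then 1 else 0 := by
    intro n l
    rw [← hb, hz_def, b.constr_basis]
  -- the unit is `a 0 0`
  have hone : a 0 0 = (1 : A) := by
    have h1 : ∀ x : A, a 0 0 * x = x := by
      have heq : (LinearMap.mulLeft ℂ (a 0 0)) = LinearMap.id := by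
        apply b.ext
        rintro ⟨n, l⟩
        simp [hb, hmul]
      intro x
      simpa using LinearMap.congr_fun heq x
    calc a 0 0 = a 0 0 * 1 := (mul_one _).symm
    _ = 1 := h1 1
  -- `z` is invariant under right multiplication by `a 0 j`
  have hzinv : ∀ j : ℤ, z ∘ₗ LinearMap.mulLeft ℂ (a 0 j) = z := by
    intro j
    apply b.ext
    rintro ⟨n, l⟩
    simp [hb, hmul, hzb]
  -- eigen relation for `T = ψ z`
  have hC : ∀ (j n₁ n₂ l : ℤ), ψ z (dd n₁ n₂ l)
      = Complex.exp (-(Complex.I * (lam * ((n₁ * j : ℤ) : ℝ)))) • ψ z (dd n₁ n₂ (l - j)) := by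
    intro j n₁ n₂ l
    have h := hψEquiv (a 0 j) z (dd n₁ n₂ l)
    rw [hzinv j] at h
    rw [h, ← hone, hL 0 j 0 0 n₁ n₂ l]
    simp
  -- shift relation for `T = ψ z`
  have hD : ∀ (j n₁ n₂ l : ℤ), ψ z (dd n₁ n₂ (l - j))
      = rhoE (MulOpposite.op (a 0 j)) (ψ z (dd n₁ n₂ l)) := by
    intro j n₁ n₂ l
    have h := hψHom z (a 0 j) (dd n₁ n₂ l)
    rw [hR 0 j n₁ n₂ l] at h
    simpa using h
  -- `rhoE (a 0 j)` shifts the basis of `E`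
  have hshift : ∀ j m : ℤ, rhoE (MulOpposite.op (a 0 j)) (be m) = be (m - j) := by
    intro j m
    rw [hbe, hE 0 j m]
    simp [← hbe]
  have hrep : ∀ (j k : ℤ) (v : E),
      be.repr (rhoE (MulOpposite.op (a 0 j)) v) k = be.repr v (k + j) := by
    intro j k v
    have hmaps : (Finsupp.lapply k ∘ₗ (be.repr.toLinearMap ∘ₗ (rhoE (MulOpposite.op (a 0 j)) : E →ₗ[ℂ] E)))
        = Finsupp.lapply (k + j) ∘ₗ be.repr.toLinearMap := by
      apply be.ext
      intro m
      simp only [LinearMap.coe_comp, LinearEquiv.coe_coe, Function.comp_apply,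
        Finsupp.lapply_apply, hshift, be.repr_self, Finsupp.single_apply]
      split_ifs with h1 h2 <;> first | rfl | (exfalso; omega)
    exact LinearMap.congr_fun hmaps v
  -- `ψ z` vanishes on the basis of `D`
  have hT0 : ∀ n₁ n₂ l : ℤ, ψ z (dd n₁ n₂ l) = 0 := by
    intro n₁ n₂ l
    by_contra hv
    set v := ψ z (dd n₁ n₂ l) with hv_def
    have key : ∀ j k : ℤ, be.repr v k =
        Complex.exp (-(Complex.I * (lam * ((n₁ * j : ℤ) : ℝ)))) * be.repr v (k + j) := by
      intro j k
      have h1 := hC j n₁ n₂ l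
      rw [hD j n₁ n₂ l] at h1
      conv_lhs => rw [hv_def, h1]
      rw [map_smul, Finsupp.smul_apply, hrep, smul_eq_mul]
    obtain ⟨k₀, hk₀⟩ : ∃ k, be.repr v k ≠ 0 := by
      by_contra h
      push_neg at h
      apply hv
      have : be.repr v = 0 := Finsupp.ext h
      simpa using congrArg be.repr.symm this
    have hall : ∀ k : ℤ, be.repr v k ≠ 0 := by
      intro k hk
      have hkey := key (k - k₀) k₀
      have hkk : k₀ + (k - k₀) = k := by ring
      rw [hkk, hk, mul_zero] at hkey
      exact hk₀ hkey
    have hfin : (Set.univ : Set ℤ).Finite :=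
      Set.Finite.subset (be.repr v).support.finite_toSet (fun k _ => by
        simpa [Finsupp.mem_support_iff] using hall k)
    exact Set.infinite_univ hfin
  have hzero : ψ z = 0 := by
    apply bd.ext
    rintro ⟨n₁, n₂, l⟩
    rw [hbd]
    simpa using hT0 n₁ n₂ l
  refine ⟨hzero, fun hinj => ?_⟩
  have hz0 : z = 0 := hinj (by rw [hzero, map_zero])
  have := hzb 0 0
  rw [hz0] at this
  simp at this
end
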